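/- Let ℓ ≥ 1 and d ≤ m be positive integers and L > 0 a constant with d ≥ 4(Lℓ + 1). Let F be an m-vertex graph with minimum degree at least d-1 such that c_i(u,v;F) ≤ L for every edge uv of F and every 3 ≤ i ≤ 2ℓ. Define g_k(L) = ∏_{j=1}^{k-1} 2(Lj+1), so that g_1(L) = 1. Then for every vertex v of F and every 1 ≤ k ≤ ℓ, we have |Γ_k(v)| ≥ deg_F(v) · d^{k-1} / g_k(L). -/

import Mathlib

/-- `c_k(u,v;G)`: the number of cycles of length `k` in `G` containing the edge `uv`.
Each such cycle corresponds to a unique path from `u` to `v` of length `k-1`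
avoiding the edge `uv`. -/
noncomputable def cyclesThroughEdge {V : Type} (G : SimpleGraph V) (k : ℕ) (u v : V) : ℕ :=
  Nat.card {p : G.Walk u v // p.IsPath ∧ p.length = k - 1 ∧ s(u, v) ∉ p.edges}

/-- `Γ_k(v)`: the set of vertices at distance exactly `k` from `v`. -/
def distSphere {V : Type} (G : SimpleGraph V) (k : ℕ) (v : V) : Set V :=
  {u | G.dist v u = k}

/-- The constant `g_k(L) = ∏_{j=1}^{k-1} 2(Lj + 1)`, so that `g_1(L) = 1`. -/
noncomputable def gconst (L : ℝ) (k : ℕ) : ℝ :=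
  ∏ j ∈ Finset.Icc 1 (k - 1), 2 * (L * j + 1)

/-- The number of neighbors of a vertex (its degree). -/
noncomputable def ndeg {V : Type} (G : SimpleGraph V) (v : V) : ℕ :=
  Nat.card ↥(G.neighborSet v)

open SimpleGraph Finset
namespace Exp

variable {V : Type} [DecidableEq V] {F : SimpleGraph V}

lemma dist_triangle3 {v x w : V} (h1 : F.Reachable v x) (h2 : F.Reachable x w) :
    F.dist v w ≤ F.dist v x + F.dist x w := by
  obtain ⟨p, hp⟩ := h1.exists_walk_length_eq_dist
  obtain ⟨q, hq⟩ := h2.exists_walk_length_eq_dist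
  calc F.dist v w ≤ (p.append q).length := SimpleGraph.dist_le _
    _ = _ := by rw [SimpleGraph.Walk.length_append, hp, hq]

lemma dist_adj_le {a b v : V} (hadj : F.Adj a b) (h : F.Reachable v a) :
    F.dist v b ≤ F.dist v a + 1 := by
  obtain ⟨p, hp⟩ := h.exists_walk_length_eq_dist
  calc F.dist v b ≤ (p.concat hadj).length := SimpleGraph.dist_le _
    _ = F.dist v a + 1 := by rw [SimpleGraph.Walk.length_concat, hp]

lemma geodesic_edge_odd {v w : V} : ∀ {u : V} (p : F.Walk u w), F.Reachable v u →
    p.length + F.dist v u = F.dist v w →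
    ∀ a b, s(a, b) ∈ p.edges → (F.dist v a + F.dist v b) % 2 = 1 := by
  intro u p
  induction p with
  | nil => simp
  | @cons u x w hadj q ih =>
    intro hr hlen a b hab
    have hrx : F.Reachable v x := hr.trans ⟨hadj.toWalk⟩
    have hd1 : F.dist v x ≤ F.dist v u + 1 := dist_adj_le hadj hr
    have hd2 : F.dist x w ≤ q.length := SimpleGraph.dist_le q
    have ht : F.dist v w ≤ F.dist v x + F.dist x w := dist_triangle3 hrx ⟨q⟩
    simp only [SimpleGraph.Walk.length_cons] at hlen
    have hx : F.dist v x = F.dist v u + 1 := by omega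
    have hq : q.length + F.dist v x = F.dist v w := by omega
    rw [SimpleGraph.Walk.edges_cons, List.mem_cons] at hab
    rcases hab with hab | hab
    · rcases Sym2.eq_iff.mp hab with ⟨rfl, rfl⟩ | ⟨rfl, rfl⟩ <;> omega
    · exact ih hrx hq a b hab

lemma walk_parity {v : V} : ∀ {a b : V} (p : F.Walk a b),
    (∀ x y, s(x, y) ∈ p.edges → (F.dist v x + F.dist v y) % 2 = 1) →
    (p.length + F.dist v a + F.dist v b) % 2 = 0 := by
  intro a b p
  induction p with
  | nil => intro _; simp only [SimpleGraph.Walk.length_nil]; omega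
  | @cons a x b hadj q ih =>
    intro h
    have h1 : (F.dist v a + F.dist v x) % 2 = 1 := by
      refine h a x ?_
      rw [SimpleGraph.Walk.edges_cons, List.mem_cons]; exact Or.inl rfl
    have h2 := ih (fun x' y' hxy => h x' y' (by rw [SimpleGraph.Walk.edges_cons, List.mem_cons]; exact Or.inr hxy))
    simp only [SimpleGraph.Walk.length_cons] at *
    omega

lemma geodesic_support {v w x : V} (p : F.Walk v w) (hgeo : p.length = F.dist v w)
    (hx : x ∈ p.support) : F.dist v x + F.dist x w = F.dist v w := by
  have hsp := p.take_spec hx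
  have hl : (p.takeUntil x hx).length + (p.dropUntil x hx).length = p.length := by
    rw [← SimpleGraph.Walk.length_append, hsp]
  have h1 : F.dist v x ≤ (p.takeUntil x hx).length := SimpleGraph.dist_le _
  have h2 : F.dist x w ≤ (p.dropUntil x hx).length := SimpleGraph.dist_le _
  have h3 : F.dist v w ≤ F.dist v x + F.dist x w :=
    dist_triangle3 ⟨p.takeUntil x hx⟩ ⟨p.dropUntil x hx⟩
  omega

lemma not_in_geodesic {v w y : V} (p : F.Walk v w) (hgeo : p.length = F.dist v w)
    (hyw : y ≠ w) (hd : F.dist v w ≤ F.dist v y) : y ∉ p.support := by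
  intro hy
  have h := geodesic_support p hgeo hy
  have h0 : F.dist y w = 0 := by omega
  have hr : F.Reachable y w := ⟨p.dropUntil y hy⟩
  exact hyw (hr.dist_eq_zero_iff.mp h0)


set_option linter.unusedSectionVars false

lemma construct {v y w w₀ : V} (hyw : F.Adj y w) (hww₀ : w ≠ w₀)
    (hw : F.dist v w ≤ F.dist v y) (hw₀ : F.dist v w₀ ≤ F.dist v y)
    (hwy : w ≠ y) (hw₀y : w₀ ≠ y)
    (hrw : F.Reachable v w) (hrw₀ : F.Reachable v w₀) :
    ∃ p : F.Walk y w₀, p.IsPath ∧ s(y, w₀) ∉ p.edges ∧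
      p.edges.head? = some s(y, w) ∧
      2 ≤ p.length ∧ p.length ≤ 1 + F.dist v w + F.dist v w₀ ∧
      (p.length + 1 + F.dist v w + F.dist v w₀) % 2 = 0 := by
  obtain ⟨pw, hpw⟩ := hrw.exists_walk_length_eq_dist
  obtain ⟨pw₀, hpw₀⟩ := hrw₀.exists_walk_length_eq_dist
  set t := (pw.reverse.append pw₀).bypass with ht
  have htp : t.IsPath := SimpleGraph.Walk.bypass_isPath _
  have hy_not : y ∉ t.support := by
    intro h
    have h2 := SimpleGraph.Walk.support_bypass_subset _ h
    rw [SimpleGraph.Walk.mem_support_append_iff] at h2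
    rcases h2 with h2 | h2
    · rw [SimpleGraph.Walk.support_reverse, List.mem_reverse] at h2
      exact not_in_geodesic pw hpw hwy.symm hw h2
    · exact not_in_geodesic pw₀ hpw₀ hw₀y.symm hw₀ h2
  refine ⟨SimpleGraph.Walk.cons hyw t, htp.cons hy_not, ?_, ?_, ?_, ?_, ?_⟩
  · intro hmem
    rw [SimpleGraph.Walk.edges_cons, List.mem_cons] at hmem
    rcases hmem with hmem | hmem
    · rcases Sym2.eq_iff.mp hmem with ⟨-, h'⟩ | ⟨h', -⟩
      · exact hww₀ h'.symm
      · exact hwy h'.symm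
    · exact hy_not (SimpleGraph.Walk.fst_mem_support_of_mem_edges _ hmem)
  · rw [SimpleGraph.Walk.edges_cons]; rfl
  · have h1 : t.length ≠ 0 := by
      intro h0
      exact hww₀ (SimpleGraph.Walk.eq_of_length_eq_zero h0)
    rw [SimpleGraph.Walk.length_cons]; omega
  · have h1 : t.length ≤ pw.reverse.length + pw₀.length := by
      rw [← SimpleGraph.Walk.length_append]
      exact SimpleGraph.Walk.length_bypass_le _
    rw [SimpleGraph.Walk.length_reverse, hpw, hpw₀] at h1
    rw [SimpleGraph.Walk.length_cons]; omega
  · have hedge : ∀ x z, s(x, z) ∈ t.edges → (F.dist v x + F.dist v z) % 2 = 1 := by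
      intro x z hxz
      have h2 := SimpleGraph.Walk.edges_bypass_subset _ hxz
      rw [SimpleGraph.Walk.edges_append, List.mem_append] at h2
      rcases h2 with h2 | h2
      · rw [SimpleGraph.Walk.edges_reverse, List.mem_reverse] at h2
        exact geodesic_edge_odd pw (Reachable.refl v) (by simp [hpw]) x z h2
      · exact geodesic_edge_odd pw₀ (Reachable.refl v) (by simp [hpw₀]) x z h2
    have hpar := walk_parity t hedge
    rw [SimpleGraph.Walk.length_cons]
    omega


lemma fiber_bound [Fintype V] {y w₀ : V} (j : ℕ) (W : Finset V) (f : V → F.Walk y w₀)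
    (hf : ∀ w ∈ W, (f w).IsPath ∧ s(y, w₀) ∉ (f w).edges ∧ (f w).length = j)
    (hinj : ∀ w ∈ W, ∀ w' ∈ W, f w = f w' → w = w') :
    W.card ≤ cyclesThroughEdge F (j + 1) y w₀ := by
  classical
  have hC : cyclesThroughEdge F (j + 1) y w₀ =
      Nat.card {p : F.Walk y w₀ // p.IsPath ∧ p.length = j ∧ s(y, w₀) ∉ p.edges} := by
    simp [cyclesThroughEdge]
  haveI : Finite {p : F.Walk y w₀ // p.IsPath ∧ p.length = j ∧ s(y, w₀) ∉ p.edges} := by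
    have : Function.Injective
        (fun p : {p : F.Walk y w₀ // p.IsPath ∧ p.length = j ∧ s(y, w₀) ∉ p.edges} =>
          (⟨p.1, p.2.2.1⟩ : {p : F.Walk y w₀ // p.length = j})) := by
      intro a b h
      exact Subtype.ext (Subtype.mk_eq_mk.mp h)
    exact Finite.of_injective _ this
  rw [hC, ← Nat.card_eq_finsetCard]
  refine Nat.card_le_card_of_injective
    (fun w : {w // w ∈ W} => (⟨f w.1, (hf w.1 w.2).1, (hf w.1 w.2).2.2, (hf w.1 w.2).2.1⟩ :
      {p : F.Walk y w₀ // p.IsPath ∧ p.length = j ∧ s(y, w₀) ∉ p.edges})) ?_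
  intro a b h
  exact Subtype.ext (hinj a.1 a.2 b.1 b.2 (Subtype.mk_eq_mk.mp h))

lemma count_le [Fintype V] {y w₀ : V} (hadj : F.Adj y w₀) (L : ℝ) (ℓ : ℕ)
    (hc : ∀ i, 3 ≤ i → i ≤ 2 * ℓ → (cyclesThroughEdge F i y w₀ : ℝ) ≤ L)
    (W : Finset V) (J : Finset ℕ) (hJ : ∀ j ∈ J, 3 ≤ j + 1 ∧ j + 1 ≤ 2 * ℓ)
    (f : V → F.Walk y w₀)
    (hf : ∀ w ∈ W, (f w).IsPath ∧ s(y, w₀) ∉ (f w).edges ∧ (f w).length ∈ J)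
    (hinj : ∀ w ∈ W, ∀ w' ∈ W, f w = f w' → w = w') :
    (W.card : ℝ) ≤ L * J.card := by
  classical
  have hfib := Finset.card_eq_sum_card_fiberwise
    (f := fun w => (f w).length) (s := W) (t := J) (fun w hw => (hf w hw).2.2)
  have key : ∀ j ∈ J, ((W.filter (fun w => (f w).length = j)).card : ℝ) ≤ L := by
    intro j hj
    have h1 : (W.filter (fun w => (f w).length = j)).card ≤
        cyclesThroughEdge F (j + 1) y w₀ := by
      refine fiber_bound j _ f ?_ ?_
      · intro w hw
        rw [Finset.mem_filter] at hw
        exact ⟨(hf w hw.1).1, (hf w hw.1).2.1, hw.2⟩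
      · intro w hw w' hw' hww
        rw [Finset.mem_filter] at hw hw'
        exact hinj w hw.1 w' hw'.1 hww
    calc ((W.filter (fun w => (f w).length = j)).card : ℝ)
        ≤ (cyclesThroughEdge F (j + 1) y w₀ : ℝ) := by exact_mod_cast h1
      _ ≤ L := hc (j + 1) (hJ j hj).1 (hJ j hj).2
  calc (W.card : ℝ) = ∑ j ∈ J, ((W.filter (fun w => (f w).length = j)).card : ℝ) := by
        rw [hfib]; push_cast; ring
    _ ≤ ∑ _j ∈ J, L := Finset.sum_le_sum key
    _ = L * J.card := by rw [Finset.sum_const, nsmul_eq_mul, mul_comm]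

lemma pred_exists {v u : V} {k : ℕ} (hk : 1 ≤ k) (hu : F.dist v u = k) :
    ∃ w₀, F.Adj u w₀ ∧ F.dist v w₀ = k - 1 := by
  have hr : F.Reachable v u := SimpleGraph.Reachable.of_dist_ne_zero (by omega)
  obtain ⟨p, hp⟩ := hr.exists_walk_length_eq_dist
  have hne : u ≠ v := by
    intro h; subst h; rw [SimpleGraph.dist_self] at hu; omega
  obtain ⟨w₀, hadj, q, hq⟩ := SimpleGraph.Walk.exists_eq_cons_of_ne hne p.reverse
  have hlen : q.length + 1 = k := by
    have := congrArg SimpleGraph.Walk.length hq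
    rw [SimpleGraph.Walk.length_reverse, hp, hu] at this
    rw [SimpleGraph.Walk.length_cons] at this
    omega
  have h1 : F.dist v w₀ ≤ k - 1 := by
    have := SimpleGraph.dist_le q
    rw [SimpleGraph.dist_comm] at this
    omega
  have h2 : F.dist v u ≤ F.dist v w₀ + 1 := dist_adj_le hadj.symm ⟨q.reverse⟩
  exact ⟨w₀, hadj, by omega⟩

lemma ndeg_eq [Fintype V] (F : SimpleGraph V) [DecidableRel F.Adj] (u : V) :
    ndeg F u = (Finset.univ.filter (fun y => F.Adj u y)).card := by
  rw [ndeg, Nat.card_eq_fintype_card, Fintype.card_subtype]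
  congr 1


lemma fwd [Fintype V] [DecidableRel F.Adj] {v u : V} {k ℓ d : ℕ} {L : ℝ} (hL : 0 < L)
    (hdL : 4 * (L * ℓ + 1) ≤ (d : ℝ))
    (hmin : (d : ℝ) - 1 ≤ (ndeg F u : ℝ))
    (hc : ∀ a b, F.Adj a b → ∀ i, 3 ≤ i → i ≤ 2 * ℓ → (cyclesThroughEdge F i a b : ℝ) ≤ L)
    (hk : 1 ≤ k) (hkl : k + 1 ≤ ℓ) (hu : F.dist v u = k) :
    (d : ℝ) / 2 ≤ ((univ.filter (fun y => F.Adj u y ∧ F.dist v y = k + 1)).card : ℝ) := by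
  have hru : F.Reachable v u := SimpleGraph.Reachable.of_dist_ne_zero (by omega)
  obtain ⟨w₀, hadj₀, hw₀⟩ := pred_exists hk hu
  haveI : Nonempty (F.Walk u w₀) := ⟨hadj₀.toWalk⟩
  set N := univ.filter (fun y => F.Adj u y) with hN
  set Fw := univ.filter (fun y => F.Adj u y ∧ F.dist v y = k + 1) with hFw
  set Back := univ.filter (fun y => F.Adj u y ∧ F.dist v y ≤ k) with hBack
  have hNsub : N ⊆ Fw ∪ Back := by
    intro z hz
    simp only [hN, hFw, hBack, Finset.mem_filter, Finset.mem_union, Finset.mem_univ,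
      true_and] at *
    have h1 : F.dist v z ≤ k + 1 := hu ▸ dist_adj_le hz hru
    rcases Nat.lt_or_ge (F.dist v z) (k + 1) with h | h
    · exact Or.inr ⟨hz, by omega⟩
    · exact Or.inl ⟨hz, by omega⟩
  have hcard : N.card ≤ Fw.card + Back.card :=
    le_trans (Finset.card_le_card hNsub) (Finset.card_union_le _ _)
  have hw₀mem : w₀ ∈ Back := by
    simp only [hBack, Finset.mem_filter, Finset.mem_univ, true_and]
    exact ⟨hadj₀, by omega⟩
  set W := Back.erase w₀ with hW
  have hBW : Back.card ≤ W.card + 1 := by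
    rw [hW, Finset.card_erase_of_mem hw₀mem]
    have := Finset.card_pos.mpr ⟨w₀, hw₀mem⟩
    omega
  have hEx : ∀ w ∈ W, ∃ p : F.Walk u w₀, p.IsPath ∧ s(u, w₀) ∉ p.edges ∧
      p.edges.head? = some s(u, w) ∧ p.length ∈ Finset.Icc 2 (2 * k) := by
    intro w hw
    rw [hW, Finset.mem_erase, hBack, Finset.mem_filter] at hw
    obtain ⟨hne, -, hadjw, hdw⟩ := hw
    obtain ⟨p, h1, h2, h3, h4, h5, -⟩ := construct hadjw hne (by omega) (by omega)
      hadjw.ne' hadj₀.ne' (hru.trans ⟨hadjw.toWalk⟩) (hru.trans ⟨hadj₀.toWalk⟩)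
    exact ⟨p, h1, h2, h3, by rw [Finset.mem_Icc]; omega⟩
  choose! g hg1 hg2 hg3 hg4 using hEx
  have hWcard : (W.card : ℝ) ≤ L * (Finset.Icc 2 (2 * k)).card := by
    refine count_le hadj₀ L ℓ (hc u w₀ hadj₀) W _ ?_ g
      (fun w hw => ⟨hg1 w hw, hg2 w hw, hg4 w hw⟩) ?_
    · intro j hj
      rw [Finset.mem_Icc] at hj
      omega
    · intro w hw w' hw' hgg
      have e1 := hg3 w hw
      have e2 := hg3 w' hw'
      rw [hgg, e2] at e1
      have e3 : s(u, w') = s(u, w) := by injection e1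
      rcases Sym2.eq_iff.mp e3 with ⟨-, h'⟩ | ⟨h', -⟩
      · exact h'.symm
      · rw [hW, Finset.mem_erase, hBack, Finset.mem_filter] at hw
        exact absurd h'.symm hw.2.2.1.ne'
  have hIcc : ((Finset.Icc 2 (2 * k)).card : ℝ) = 2 * (k : ℝ) - 1 := by
    rw [Nat.card_Icc]
    have h2 : 2 * k + 1 - 2 = 2 * k - 1 := by omega
    rw [h2, Nat.cast_sub (by omega)]
    push_cast; ring
  have hd1 : (d : ℝ) - 1 ≤ (N.card : ℝ) := by rwa [hN, ← ndeg_eq]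
  have hkℝ : (k : ℝ) + 1 ≤ (ℓ : ℝ) := by exact_mod_cast hkl
  have hmul : L * ((k : ℝ) + 1) ≤ L * ℓ := mul_le_mul_of_nonneg_left hkℝ hL.le
  have hcast : (N.card : ℝ) ≤ (Fw.card : ℝ) + (Back.card : ℝ) := by exact_mod_cast hcard
  have hBWr : (Back.card : ℝ) ≤ (W.card : ℝ) + 1 := by exact_mod_cast hBW
  rw [hIcc] at hWcard
  linarith

lemma back [Fintype V] [DecidableRel F.Adj] {v y : V} {k ℓ : ℕ} {L : ℝ} (hL : 0 < L)
    (hc : ∀ a b, F.Adj a b → ∀ i, 3 ≤ i → i ≤ 2 * ℓ → (cyclesThroughEdge F i a b : ℝ) ≤ L)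
    (hk : 1 ≤ k) (hkl : k + 1 ≤ ℓ) (hy : F.dist v y = k + 1) :
    ((univ.filter (fun w => F.Adj y w ∧ F.dist v w = k)).card : ℝ) ≤ L * k + 1 := by
  obtain ⟨w₀, hadj₀, hw₀⟩ := pred_exists (by omega) hy
  rw [show k + 1 - 1 = k by omega] at hw₀
  haveI : Nonempty (F.Walk y w₀) := ⟨hadj₀.toWalk⟩
  set B := univ.filter (fun w => F.Adj y w ∧ F.dist v w = k) with hB
  have hw₀mem : w₀ ∈ B := by
    simp only [hB, Finset.mem_filter, Finset.mem_univ, true_and]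
    exact ⟨hadj₀, hw₀⟩
  set W := B.erase w₀ with hW
  have hBW : B.card ≤ W.card + 1 := by
    rw [hW, Finset.card_erase_of_mem hw₀mem]
    have := Finset.card_pos.mpr ⟨w₀, hw₀mem⟩
    omega
  set J := (Finset.Icc 1 k).image (fun t => 2 * t + 1) with hJdef
  have hEx : ∀ w ∈ W, ∃ p : F.Walk y w₀, p.IsPath ∧ s(y, w₀) ∉ p.edges ∧
      p.edges.head? = some s(y, w) ∧ p.length ∈ J := by
    intro w hw
    rw [hW, Finset.mem_erase, hB, Finset.mem_filter] at hw
    obtain ⟨hne, -, hadjw, hdw⟩ := hw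
    have hrw : F.Reachable v w := SimpleGraph.Reachable.of_dist_ne_zero (by omega)
    have hrw₀ : F.Reachable v w₀ := SimpleGraph.Reachable.of_dist_ne_zero (by omega)
    obtain ⟨p, h1, h2, h3, h4, h5, h6⟩ := construct hadjw hne (by omega) (by omega)
      hadjw.ne' hadj₀.ne' hrw hrw₀
    refine ⟨p, h1, h2, h3, ?_⟩
    rw [hJdef, Finset.mem_image]
    exact ⟨(p.length - 1) / 2, by rw [Finset.mem_Icc]; omega, by omega⟩
  choose! g hg1 hg2 hg3 hg4 using hEx
  have hWcard : (W.card : ℝ) ≤ L * J.card := by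
    refine count_le hadj₀ L ℓ (hc y w₀ hadj₀) W _ ?_ g
      (fun w hw => ⟨hg1 w hw, hg2 w hw, hg4 w hw⟩) ?_
    · intro j hj
      rw [hJdef, Finset.mem_image] at hj
      obtain ⟨t, ht, rfl⟩ := hj
      rw [Finset.mem_Icc] at ht
      omega
    · intro w hw w' hw' hgg
      have e1 := hg3 w hw
      have e2 := hg3 w' hw'
      rw [hgg, e2] at e1
      have e3 : s(y, w') = s(y, w) := by injection e1
      rcases Sym2.eq_iff.mp e3 with ⟨-, h'⟩ | ⟨h', -⟩
      · exact h'.symm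
      · rw [hW, Finset.mem_erase, hB, Finset.mem_filter] at hw
        exact absurd h'.symm hw.2.2.1.ne'
  have hJcard : (J.card : ℝ) = (k : ℝ) := by
    rw [hJdef, Finset.card_image_of_injective _ (fun a b h => by omega), Nat.card_Icc]
    norm_num
  have hBWr : (B.card : ℝ) ≤ (W.card : ℝ) + 1 := by exact_mod_cast hBW
  rw [hJcard] at hWcard
  linarith


lemma double_count [Fintype V] [DecidableRel F.Adj] (v : V) (k : ℕ) :
    ∑ u ∈ univ.filter (fun u => F.dist v u = k),
      (univ.filter (fun y' => F.Adj u y' ∧ F.dist v y' = k + 1)).card =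
    ∑ y ∈ univ.filter (fun u => F.dist v u = k + 1),
      (univ.filter (fun w => F.Adj y w ∧ F.dist v w = k)).card := by
  set Sk := univ.filter (fun u => F.dist v u = k) with hSk
  set Sk1 := univ.filter (fun u => F.dist v u = k + 1) with hSk1
  set E := (Sk ×ˢ Sk1).filter (fun x => F.Adj x.1 x.2) with hE
  have h1 : E.card = ∑ u ∈ Sk,
      (univ.filter (fun y' => F.Adj u y' ∧ F.dist v y' = k + 1)).card := by
    rw [Finset.card_eq_sum_card_fiberwise (f := Prod.fst) (t := Sk)
      (fun x hx => by
        rw [hE, Finset.mem_coe, Finset.mem_filter, Finset.mem_product] at hx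
        exact hx.1.1)]
    refine Finset.sum_congr rfl ?_
    intro u hu
    refine Finset.card_bij (fun x _ => x.2) ?_ ?_ ?_
    · intro x hx
      simp only [hE, hSk1, Finset.mem_filter, Finset.mem_product, Finset.mem_univ,
        true_and] at hx ⊢
      obtain ⟨⟨⟨-, hx2⟩, hadj⟩, hfst⟩ := hx
      rw [← hfst]
      exact ⟨hadj, hx2⟩
    · intro x hx x' hx' hxx
      rw [Finset.mem_filter] at hx hx'
      exact Prod.ext (hx.2.trans hx'.2.symm) hxx
    · intro b hb
      simp only [hSk1, Finset.mem_filter, Finset.mem_univ, true_and] at hb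
      refine ⟨(u, b), ?_, rfl⟩
      simp only [hE, hSk1, Finset.mem_filter, Finset.mem_product, Finset.mem_univ, true_and]
      exact ⟨⟨⟨hu, hb.2⟩, hb.1⟩, trivial⟩
  have h2 : E.card = ∑ y ∈ Sk1,
      (univ.filter (fun w => F.Adj y w ∧ F.dist v w = k)).card := by
    rw [Finset.card_eq_sum_card_fiberwise (f := Prod.snd) (t := Sk1)
      (fun x hx => by
        rw [hE, Finset.mem_coe, Finset.mem_filter, Finset.mem_product] at hx
        exact hx.1.2)]
    refine Finset.sum_congr rfl ?_
    intro y hy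
    refine Finset.card_bij (fun x _ => x.1) ?_ ?_ ?_
    · intro x hx
      simp only [hE, hSk, Finset.mem_filter, Finset.mem_product, Finset.mem_univ,
        true_and] at hx ⊢
      obtain ⟨⟨⟨hx1, -⟩, hadj⟩, hsnd⟩ := hx
      rw [← hsnd]
      exact ⟨hadj.symm, hx1⟩
    · intro x hx x' hx' hxx
      rw [Finset.mem_filter] at hx hx'
      exact Prod.ext hxx (hx.2.trans hx'.2.symm)
    · intro b hb
      simp only [hSk, Finset.mem_filter, Finset.mem_univ, true_and] at hb
      refine ⟨(b, y), ?_, rfl⟩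
      simp only [hE, hSk, Finset.mem_filter, Finset.mem_product, Finset.mem_univ, true_and]
      exact ⟨⟨⟨hb.2, hy⟩, hb.1.symm⟩, trivial⟩
  rw [← h1, h2]

end Exp

/-- Expansion lemma: let `ℓ ≥ 1`, `d ≤ m`, `L > 0` with `d ≥ 4(Lℓ + 1)`, and let `F` be an
`m`-vertex graph with minimum degree at least `d - 1` such that `c_i(u,v;F) ≤ L` for every
edge `uv` and every `3 ≤ i ≤ 2ℓ`.  Then for every vertex `v` and every `1 ≤ k ≤ ℓ`,
`|Γ_k(v)| ≥ deg_F(v) · d^{k-1} / g_k(L)`. -/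


theorem statement_12 (ℓ m d : ℕ) (hℓ : 1 ≤ ℓ) (hdm : d ≤ m) (L : ℝ) (hL : 0 < L)
    (hdL : 4 * (L * ℓ + 1) ≤ (d : ℝ))
    (F : SimpleGraph (Fin m))
    (hmin : ∀ w, (d : ℝ) - 1 ≤ (ndeg F w : ℝ))
    (hc : ∀ u v, F.Adj u v → ∀ i, 3 ≤ i → i ≤ 2 * ℓ → (cyclesThroughEdge F i u v : ℝ) ≤ L) :
    ∀ v : Fin m, ∀ k, 1 ≤ k → k ≤ ℓ →
      (ndeg F v : ℝ) * (d : ℝ) ^ (k - 1) / gconst L k ≤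
        (Nat.card ↥(distSphere F k v) : ℝ) := by
  intro v k hk1 hkℓ
  haveI : DecidableRel F.Adj := Classical.decRel _
  have hsphere : ∀ j : ℕ, Nat.card ↥(distSphere F j v) =
      (univ.filter (fun u => F.dist v u = j)).card := by
    intro j
    rw [distSphere, Nat.card_coe_set_eq, Set.ncard_eq_toFinset_card', Set.toFinset_setOf]
  revert hkℓ
  induction k, hk1 using Nat.le_induction with
  | base =>
    intro _
    rw [hsphere 1]
    have h1 : (univ.filter (fun u => F.dist v u = 1)) = univ.filter (fun u => F.Adj v u) := by
      ext u
      simp [SimpleGraph.dist_eq_one_iff_adj]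
    have hg1 : gconst L 1 = 1 := by
      rw [gconst]
      norm_num
    rw [h1, ← Exp.ndeg_eq, hg1]
    simp
  | succ k hk ih =>
    intro hk1ℓ
    have ihk := ih (by omega)
    rw [hsphere k] at ihk
    rw [hsphere (k + 1)]
    set Sk := univ.filter (fun u => F.dist v u = k) with hSk
    set Sk1 := univ.filter (fun u => F.dist v u = k + 1) with hSk1
    have hdc := Exp.double_count (F := F) v k
    have hfwd : ∀ u ∈ Sk, (d : ℝ) / 2 ≤
        (((univ.filter (fun y' => F.Adj u y' ∧ F.dist v y' = k + 1)).card : ℕ) : ℝ) := by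
      intro u hu
      rw [hSk, Finset.mem_filter] at hu
      exact Exp.fwd hL hdL (hmin u) hc hk hk1ℓ hu.2
    have hback : ∀ y ∈ Sk1,
        (((univ.filter (fun w => F.Adj y w ∧ F.dist v w = k)).card : ℕ) : ℝ) ≤ L * k + 1 := by
      intro y hy
      rw [hSk1, Finset.mem_filter] at hy
      exact Exp.back hL hc hk hk1ℓ hy.2
    have key : (d : ℝ) / 2 * Sk.card ≤ (L * k + 1) * Sk1.card := by
      calc (d : ℝ) / 2 * Sk.card = ∑ _u ∈ Sk, (d : ℝ) / 2 := by
            rw [Finset.sum_const, nsmul_eq_mul]; ring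
        _ ≤ ∑ u ∈ Sk,
            (((univ.filter (fun y' => F.Adj u y' ∧ F.dist v y' = k + 1)).card : ℕ) : ℝ) :=
            Finset.sum_le_sum hfwd
        _ = ((∑ u ∈ Sk,
            (univ.filter (fun y' => F.Adj u y' ∧ F.dist v y' = k + 1)).card : ℕ) : ℝ) := by
            push_cast; ring
        _ = ((∑ y ∈ Sk1,
            (univ.filter (fun w => F.Adj y w ∧ F.dist v w = k)).card : ℕ) : ℝ) := by
            rw [hdc]
        _ = ∑ y ∈ Sk1,
            (((univ.filter (fun w => F.Adj y w ∧ F.dist v w = k)).card : ℕ) : ℝ) := by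
            push_cast; ring
        _ ≤ ∑ _y ∈ Sk1, (L * k + 1) := Finset.sum_le_sum hback
        _ = (L * k + 1) * Sk1.card := by rw [Finset.sum_const, nsmul_eq_mul]; ring
    have hgpos : 0 < gconst L k := by
      rw [gconst]
      refine Finset.prod_pos ?_
      intro j hj
      have h0 : (0 : ℝ) ≤ L * j := mul_nonneg hL.le (Nat.cast_nonneg j)
      linarith
    have hcpos : (0 : ℝ) < L * k + 1 := by
      have h0 : (0 : ℝ) ≤ L * k := mul_nonneg hL.le (Nat.cast_nonneg k)
      linarith
    have hg : gconst L (k + 1) = gconst L k * (2 * (L * k + 1)) := by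
      rw [gconst, gconst]
      rw [show k + 1 - 1 = (k - 1) + 1 by omega, Finset.prod_Icc_succ_top (by omega)]
      rw [show k - 1 + 1 = k by omega]
    have hpow : (d : ℝ) ^ (k + 1 - 1) = (d : ℝ) ^ (k - 1) * d := by
      rw [← pow_succ]
      congr 1
      omega
    have hih' : (ndeg F v : ℝ) * (d : ℝ) ^ (k - 1) ≤ (Sk.card : ℝ) * gconst L k :=
      (div_le_iff₀ hgpos).mp ihk
    rw [hg, div_le_iff₀ (by positivity)]
    calc (ndeg F v : ℝ) * (d : ℝ) ^ (k + 1 - 1)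
        = ((ndeg F v : ℝ) * (d : ℝ) ^ (k - 1)) * d := by rw [hpow]; ring
      _ ≤ ((Sk.card : ℝ) * gconst L k) * d :=
          mul_le_mul_of_nonneg_right hih' (Nat.cast_nonneg d)
      _ = (gconst L k * 2) * ((d : ℝ) / 2 * Sk.card) := by ring
      _ ≤ (gconst L k * 2) * ((L * k + 1) * Sk1.card) :=
          mul_le_mul_of_nonneg_left key (by linarith)
      _ = (Sk1.card : ℝ) * (gconst L k * (2 * (L * k + 1))) := by ring
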